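/- Let G be a graph obtained from a 6-cycle C_6 by adding k new vertices (1 ≤ k ≤ 3), each new vertex being adjacent to exactly the two endpoints of one edge of the cycle, with the chosen edges pairwise distinct. If G has diameter 3, then the rainbow connection number of G equals 3. -/

import Mathlib

open SimpleGraph

/-- An edge coloring of `G` with `k` colors makes `G` rainbow connected if between every pair
of distinct vertices there is a path all of whose edges receive pairwise distinct colors. -/
def IsRainbowConnected {V : Type*} (G : SimpleGraph V) {k : ℕ} (c : Sym2 V → Fin k) : Prop :=
  ∀ u v : V, u ≠ v → ∃ p : G.Walk u v, p.IsPath ∧ (p.edges.map c).Nodup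

/-- The rainbow connection number `rc G`: the minimum number of colors `k` for which some
edge coloring with `k` colors makes `G` rainbow connected. -/
noncomputable def rc {V : Type*} (G : SimpleGraph V) : ℕ :=
  sInf {k | ∃ c : Sym2 V → Fin k, IsRainbowConnected G c}

/-- The graph obtained from the 6-cycle `C 6` (the `Sum.inl` vertices) by adding `k` new
vertices (the `Sum.inr` vertices), where the new vertex `j` is adjacent to exactly the two
endpoints `f j` and `f j + 1` of the cycle edge `{f j, f j + 1}` chosen for it. -/
def sixCyclePlusEars (k : ℕ) (f : Fin k → Fin 6) : SimpleGraph (Fin 6 ⊕ Fin k) :=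
  SimpleGraph.fromRel (fun x y =>
    (∃ u v : Fin 6, x = Sum.inl u ∧ y = Sum.inl v ∧ (cycleGraph 6).Adj u v) ∨
    (∃ (u : Fin 6) (j : Fin k), x = Sum.inl u ∧ y = Sum.inr j ∧ (u = f j ∨ u = f j + 1)))

namespace RCAux

variable {k : ℕ}

def adjB (f : Fin k → Fin 6) : (Fin 6 ⊕ Fin k) → (Fin 6 ⊕ Fin k) → Bool
  | Sum.inl i, Sum.inl i' => i' == i + 1 || i == i' + 1
  | Sum.inl i, Sum.inr j => i == f j || i == f j + 1
  | Sum.inr j, Sum.inl i => i == f j || i == f j + 1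
  | _, _ => false

set_option maxRecDepth 4000 in
lemma adj_iff (f : Fin k → Fin 6) (x y : Fin 6 ⊕ Fin k) :
    (sixCyclePlusEars k f).Adj x y ↔ adjB f x y := by
  unfold sixCyclePlusEars
  rw [fromRel_adj]
  rcases x with i | j <;> rcases y with i' | j' <;>
    simp only [adjB, Sum.inl.injEq, Sum.inr.injEq, exists_and_left, exists_eq_left',
      cycleGraph_adj, Sum.inl_injective.ne_iff, Sum.inr_injective.ne_iff, ne_eq,
      reduceCtorEq, Bool.or_eq_true, beq_iff_eq, false_iff, not_and, not_or,
      exists_eq_left, exists_false, false_or, or_false, exists_and_right]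
  · simp only [false_and, false_or, or_false, and_false]
    revert i i'; decide
  · simp only [false_and, false_or, or_false, and_false, not_false_iff, true_and]
  · simp only [false_and, false_or, or_false, and_false, not_false_iff, true_and]
  · simp only [false_and, false_or, or_false, and_false, and_true, iff_false, not_and,
      not_false_iff, implies_true]

instance (f : Fin k → Fin 6) : DecidableRel (sixCyclePlusEars k f).Adj :=
  fun x y => decidable_of_iff _ (adj_iff f x y).symm

open Fin.NatCast in
def gcol (f : Fin k → Fin 6) : (Fin 6 ⊕ Fin k) → (Fin 6 ⊕ Fin k) → Fin 3
  | Sum.inl i, Sum.inl i' =>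
      if i' = i + 1 then (i.val : Fin 3) else if i = i' + 1 then (i'.val : Fin 3) else 0
  | Sum.inl _, Sum.inr j => ((f j).val : Fin 3)
  | Sum.inr j, Sum.inl _ => ((f j).val : Fin 3)
  | Sum.inr _, Sum.inr _ => 0

open Fin.NatCast in
lemma gcol_symm (f : Fin k → Fin 6) (x y : Fin 6 ⊕ Fin k) : gcol f x y = gcol f y x := by
  rcases x with i | j <;> rcases y with i' | j' <;> try rfl
  show (if i' = i + 1 then ((i.val : Fin 3)) else if i = i' + 1 then (i'.val : Fin 3) else 0) =
       (if i = i' + 1 then ((i'.val : Fin 3)) else if i' = i + 1 then (i.val : Fin 3) else 0)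
  revert i i'
  decide

def col (f : Fin k → Fin 6) : Sym2 (Fin 6 ⊕ Fin k) → Fin 3 :=
  Sym2.lift ⟨gcol f, fun x y => gcol_symm f x y⟩

def rb (f : Fin k → Fin 6) (u v : Fin 6 ⊕ Fin k) : Prop :=
  (sixCyclePlusEars k f).Adj u v ∨
  (∃ w, (sixCyclePlusEars k f).Adj u w ∧ (sixCyclePlusEars k f).Adj w v ∧
    gcol f u w ≠ gcol f w v) ∨
  (∃ w x, (sixCyclePlusEars k f).Adj u w ∧ (sixCyclePlusEars k f).Adj w x ∧
    (sixCyclePlusEars k f).Adj x v ∧ w ≠ v ∧ u ≠ x ∧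
    gcol f u w ≠ gcol f w x ∧ gcol f u w ≠ gcol f x v ∧ gcol f w x ≠ gcol f x v)

instance (f : Fin k → Fin 6) (u v : Fin 6 ⊕ Fin k) : Decidable (rb f u v) := by
  unfold rb; infer_instance

lemma rb_path (f : Fin k → Fin 6) {u v : Fin 6 ⊕ Fin k} (hn : u ≠ v) (h : rb f u v) :
    ∃ p : (sixCyclePlusEars k f).Walk u v, p.IsPath ∧ (p.edges.map (col f)).Nodup := by
  rcases h with h | ⟨w, h1, h2, hc⟩ | ⟨w, x, h1, h2, h3, hwv, hux, c1, c2, c3⟩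
  · exact ⟨Walk.cons h Walk.nil, by simp [Walk.isPath_def, h.ne], by simp⟩
  · refine ⟨Walk.cons h1 (Walk.cons h2 Walk.nil), ?_, ?_⟩
    · simp [Walk.isPath_def, h1.ne, h2.ne, hn]
    · simpa [col] using hc
  · refine ⟨Walk.cons h1 (Walk.cons h2 (Walk.cons h3 Walk.nil)), ?_, ?_⟩
    · simp [Walk.isPath_def, h1.ne, h2.ne, h3.ne, hn, hwv, hux]
    · simpa [col] using ⟨⟨c1, c2⟩, c3⟩

set_option maxRecDepth 10000 in
lemma key1 : ∀ f : Fin 1 → Fin 6, (∀ j j' : Fin 1, f j' ≠ f j + 3) →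
    ∀ u v : Fin 6 ⊕ Fin 1, u ≠ v → rb f u v := by decide

set_option maxRecDepth 20000 in
set_option maxHeartbeats 2000000 in
lemma key2 : ∀ f : Fin 2 → Fin 6, Function.Injective f → (∀ j j' : Fin 2, f j' ≠ f j + 3) →
    ∀ u v : Fin 6 ⊕ Fin 2, u ≠ v → rb f u v := by decide

set_option maxRecDepth 40000 in
set_option maxHeartbeats 10000000 in
lemma key3 : ∀ f : Fin 3 → Fin 6, Function.Injective f → (∀ j j' : Fin 3, f j' ≠ f j + 3) →
    ∀ u v : Fin 6 ⊕ Fin 3, u ≠ v → rb f u v := by decide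

def noShort (f : Fin k → Fin 6) (u v : Fin 6 ⊕ Fin k) : Prop :=
  (¬ (sixCyclePlusEars k f).Adj u v) ∧
  (∀ a, ¬((sixCyclePlusEars k f).Adj u a ∧ (sixCyclePlusEars k f).Adj a v)) ∧
  (∀ a b, ¬((sixCyclePlusEars k f).Adj u a ∧ (sixCyclePlusEars k f).Adj a b ∧
    (sixCyclePlusEars k f).Adj b v))

instance (f : Fin k → Fin 6) (u v) : Decidable (noShort f u v) := by
  unfold noShort; infer_instance

set_option maxRecDepth 10000 in
lemma bad1 : ∀ f : Fin 1 → Fin 6, ∀ j j' : Fin 1, f j' = f j + 3 →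
    noShort f (Sum.inr j) (Sum.inr j') := by decide

set_option maxRecDepth 20000 in
set_option maxHeartbeats 2000000 in
lemma bad2 : ∀ f : Fin 2 → Fin 6, ∀ j j' : Fin 2, f j' = f j + 3 →
    noShort f (Sum.inr j) (Sum.inr j') := by decide

set_option maxRecDepth 40000 in
set_option maxHeartbeats 10000000 in
lemma bad3 : ∀ f : Fin 3 → Fin 6, ∀ j j' : Fin 3, f j' = f j + 3 →
    noShort f (Sum.inr j) (Sum.inr j') := by decide

lemma walk_le_three {V : Type*} {G : SimpleGraph V} {u v : V} (p : G.Walk u v)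
    (h : p.length ≤ 3) :
    u = v ∨ G.Adj u v ∨ (∃ a, G.Adj u a ∧ G.Adj a v) ∨
      ∃ a b, G.Adj u a ∧ G.Adj a b ∧ G.Adj b v := by
  cases p with
  | nil => exact Or.inl rfl
  | cons h1 q =>
    cases q with
    | nil => exact Or.inr (Or.inl h1)
    | cons h2 r =>
      cases r with
      | nil => exact Or.inr (Or.inr (Or.inl ⟨_, h1, h2⟩))
      | cons h3 s =>
        cases s with
        | nil => exact Or.inr (Or.inr (Or.inr ⟨_, _, h1, h2, h3⟩))
        | cons h4 t => simp [Walk.length_cons] at h; omega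

lemma adj_cycle (f : Fin k → Fin 6) (i : Fin 6) :
    (sixCyclePlusEars k f).Adj (Sum.inl i) (Sum.inl (i + 1)) := by
  rw [adj_iff]; simp [adjB]

lemma adj_ear (f : Fin k → Fin 6) (j : Fin k) :
    (sixCyclePlusEars k f).Adj (Sum.inl (f j)) (Sum.inr j) := by
  rw [adj_iff]; simp [adjB]

open Fin.CommRing in
lemma main_aux {k : ℕ} (f : Fin k → Fin 6)
    (hkey : (∀ j j' : Fin k, f j' ≠ f j + 3) → ∀ u v : Fin 6 ⊕ Fin k, u ≠ v → rb f u v)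
    (hbad : ∀ j j' : Fin k, f j' = f j + 3 → noShort f (Sum.inr j) (Sum.inr j'))
    (hdiam : (sixCyclePlusEars k f).diam = 3) :
    rc (sixCyclePlusEars k f) = 3 := by
  have hetop : (sixCyclePlusEars k f).ediam ≠ ⊤ := by
    intro h
    rw [SimpleGraph.diam, h] at hdiam
    simp at hdiam
  -- no opposite ears
  have hno : ∀ j j' : Fin k, f j' ≠ f j + 3 := by
    intro j j' hopp
    have hjj : j ≠ j' := by
      rintro rfl
      have : ∀ x : Fin 6, x ≠ x + 3 := by decide
      exact this (f j) hopp
    have hre : (sixCyclePlusEars k f).Reachable (Sum.inr j) (Sum.inr j') := by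
      have step : ∀ i : Fin 6, (sixCyclePlusEars k f).Reachable (Sum.inl i) (Sum.inl (i + 1)) :=
        fun i => (adj_cycle f i).reachable
      have heq : f j + 1 + 1 + 1 = f j' := by rw [hopp]; ring
      refine (adj_ear f j).symm.reachable.trans
        (((step (f j)).trans ((step (f j + 1)).trans (step (f j + 1 + 1)))).trans ?_)
      rw [heq]
      exact (adj_ear f j').reachable
    have hd : (sixCyclePlusEars k f).dist (Sum.inr j) (Sum.inr j') ≤ 3 :=
      hdiam ▸ SimpleGraph.dist_le_diam hetop
    obtain ⟨p, hp⟩ := hre.exists_walk_length_eq_dist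
    obtain ⟨h1, h2, h3⟩ := hbad j j' hopp
    rcases walk_le_three p (by omega) with h | h | ⟨a, ha⟩ | ⟨a, b, hab⟩
    · exact hjj (Sum.inr_injective h)
    · exact h1 h
    · exact h2 a ha
    · exact h3 a b hab
  -- the set of good numbers of colors
  have h3mem : 3 ∈ {m | ∃ c : Sym2 (Fin 6 ⊕ Fin k) → Fin m,
      IsRainbowConnected (sixCyclePlusEars k f) c} := by
    refine ⟨col f, fun u v huv => rb_path f huv (hkey hno u v huv)⟩
  -- lower bound
  obtain ⟨u, v, huv⟩ := SimpleGraph.exists_dist_eq_diam (G := sixCyclePlusEars k f)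
  rw [hdiam] at huv
  have hune : u ≠ v := by
    rintro rfl
    rw [SimpleGraph.dist_self] at huv
    omega
  have lb : ∀ m ∈ {m | ∃ c : Sym2 (Fin 6 ⊕ Fin k) → Fin m,
      IsRainbowConnected (sixCyclePlusEars k f) c}, 3 ≤ m := by
    rintro m ⟨c, hc⟩
    obtain ⟨p, hpath, hnodup⟩ := hc u v hune
    have l1 : 3 ≤ p.length := huv ▸ SimpleGraph.dist_le p
    have l2 : (p.edges.map c).length ≤ m := by
      simpa using hnodup.length_le_card
    simp [Walk.length_edges] at l2
    omega
  exact le_antisymm (Nat.sInf_le h3mem) (le_csInf ⟨3, h3mem⟩ lb)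

end RCAux

/-- If `G` is obtained from a 6-cycle by adding `k` new vertices (`1 ≤ k ≤ 3`), each new
vertex adjacent to exactly the two endpoints of one edge of the cycle, the chosen edges
being pairwise distinct (i.e. `f` injective), and `G` has diameter `3`, then the rainbow
connection number of `G` equals `3`. -/
theorem rc_sixCycle_plus_ears (k : ℕ) (h1 : 1 ≤ k) (h3 : k ≤ 3) (f : Fin k → Fin 6)
    (hf : Function.Injective f) (hdiam : (sixCyclePlusEars k f).diam = 3) :
    rc (sixCyclePlusEars k f) = 3 := by
  interval_cases k
  · exact RCAux.main_aux f (fun hno => RCAux.key1 f hno) (RCAux.bad1 f) hdiam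
  · exact RCAux.main_aux f (fun hno => RCAux.key2 f hf hno) (RCAux.bad2 f) hdiam
  · exact RCAux.main_aux f (fun hno => RCAux.key3 f hf hno) (RCAux.bad3 f) hdiam
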